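/- arXiv:1409.5621 — 2 statements merged into one kernel-verified Lean document; each statement's English description precedes it below -/
import Mathlib

section
/- If x and y are elements of a (topologically complete, e.g. finite-dimensional nilpotent-completed or formal) Lie algebra satisfying [x, y] = D·y for a scalar D ≠ 0, then the Baker–Campbell–Hausdorff product satisfies log(exp(x)·exp(y)) = x + (D/(1 - e^{-D}))·y. -/
open NormedSpace

lemma bch_conj_exp {A : Type*} [NormedRing A] [NormedAlgebra ℝ A] [CompleteSpace A]
    (x y : A) (D : ℝ) (h : x * y - y * x = D • y) (t : ℝ) :
    exp (t • x) * y = Real.exp (t * D) • (y * exp (t • x)) := by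
  set u : ℝ → A := fun s => Real.exp (s * (-D)) • (exp (s • x) * y * exp (s • (-x))) with hu
  have hderiv : ∀ s : ℝ, HasDerivAt u 0 s := by
    intro s
    have h1 : HasDerivAt (fun s : ℝ => exp (s • x)) (x * exp (s • x)) s :=
      hasDerivAt_exp_smul_const' x s
    have h2 : HasDerivAt (fun s : ℝ => exp (s • (-x))) (-x * exp (s • (-x))) s :=
      hasDerivAt_exp_smul_const' (-x) s
    have h3 : HasDerivAt (fun s : ℝ => Real.exp (s * (-D))) (Real.exp (s * (-D)) * (-D)) s := by
      exact (Real.hasDerivAt_exp (s * (-D))).comp s (hasDerivAt_mul_const (-D))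
    have h4 := h3.smul ((h1.mul_const y).mul h2)
    have hc : x * exp (s • x) = exp (s • x) * x :=
      (((Commute.refl x).smul_right s).exp_right).eq
    have key : x * exp (s • x) * y * exp (s • (-x)) +
        exp (s • x) * y * (-x * exp (s • (-x))) =
        D • (exp (s • x) * y * exp (s • (-x))) := by
      have e1 : x * exp (s • x) * y * exp (s • (-x)) +
          exp (s • x) * y * (-x * exp (s • (-x))) =
          exp (s • x) * ((x * y - y * x) * exp (s • (-x))) := by
        rw [hc]; noncomm_ring
      rw [e1, h]
      simp [smul_mul_assoc, mul_smul_comm, mul_assoc]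
    have h4' : HasDerivAt u 0 s := by
      refine h4.congr_deriv (Eq.symm ?_)
      rw [key, smul_smul]; simp only [Pi.mul_apply]; rw [← add_smul]
      ring_nf
      simp
    exact h4'
  have hconst : u t = u 0 :=
    is_const_of_deriv_eq_zero (fun s => (hderiv s).differentiableAt)
      (fun s => (hderiv s).deriv) t 0
  have hu0 : u 0 = y := by simp [hu, exp_zero]
  have hueq : Real.exp (t * (-D)) • (exp (t • x) * y * exp (t • (-x))) = y :=
    hconst.trans hu0
  have hinv : exp (t • (-x)) * exp (t • x) = 1 := by
    rw [← exp_add_of_commute_of_mem_ball (𝕂 := ℝ) ((((Commute.refl x).neg_left).smul_left t).smul_right t) ((expSeries_radius_eq_top ℝ A).symm ▸ edist_lt_top _ _) ((expSeries_radius_eq_top ℝ A).symm ▸ edist_lt_top _ _)]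
    simp [smul_neg]
  have h5 := congrArg (fun a => Real.exp (t * D) • (a * exp (t • x))) hueq
  simp only [smul_mul_assoc, smul_smul, mul_assoc, hinv, mul_one, ← Real.exp_add] at h5
  rw [← h5]
  norm_num

/-- BCH formula for `[x, y] = D • y`, `D ≠ 0`:
`exp x * exp y = exp (x + (D/(1 - e^{-D})) • y)`,
i.e. `log (exp x * exp y) = x + (D/(1 - e^{-D})) • y`. -/
theorem stmt_1 {A : Type*} [NormedRing A] [NormedAlgebra ℝ A] [CompleteSpace A]
    (x y : A) (D : ℝ) (hD : D ≠ 0) (h : x * y - y * x = D • y) :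
    NormedSpace.exp x * NormedSpace.exp y =
      NormedSpace.exp (x + (D / (1 - Real.exp (-D))) • y) := by
  have hden : 1 - Real.exp (-D) ≠ 0 := by
    rw [sub_ne_zero]
    intro he
    have h0 : (-D) = 0 := by have h1 := he.symm; rwa [← Real.exp_zero, Real.exp_eq_exp] at h1
    exact hD (by linarith)
  set c : ℝ := D / (1 - Real.exp (-D)) with hc
  set z : A := x + c • y with hz
  set φ : ℝ → ℝ := fun t => c / D * (1 - Real.exp (t * (-D))) with hφ
  set g : ℝ → A := fun t => exp (t • (-z)) * (exp (t • x) * exp (φ t • y)) with hg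
  have hφ' : ∀ t : ℝ, HasDerivAt φ (c * Real.exp (t * (-D))) t := by
    intro t
    have h1 : HasDerivAt (fun t : ℝ => Real.exp (t * (-D))) (Real.exp (t * (-D)) * (-D)) t := by
      exact (Real.hasDerivAt_exp (t * (-D))).comp t (hasDerivAt_mul_const (-D))
    have := ((hasDerivAt_const t (1:ℝ)).sub h1).const_mul (c / D)
    refine this.congr_deriv (Eq.symm ?_)
    field_simp
    ring
  have hgd : ∀ t : ℝ, HasDerivAt g 0 t := by
    intro t
    have h1 : HasDerivAt (fun t : ℝ => exp (t • (-z))) (-z * exp (t • (-z))) t :=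
      hasDerivAt_exp_smul_const' (-z) t
    have h2 : HasDerivAt (fun t : ℝ => exp (t • x)) (x * exp (t • x)) t :=
      hasDerivAt_exp_smul_const' x t
    have h3 : HasDerivAt (fun s : ℝ => exp (s • y)) (y * exp (φ t • y)) (φ t) :=
      hasDerivAt_exp_smul_const' y (φ t)
    have h4 : HasDerivAt (fun t : ℝ => exp (φ t • y))
        ((c * Real.exp (t * (-D))) • (y * exp (φ t • y))) t := by
      exact HasDerivAt.scomp t h3 (hφ' t)
    have h5 := h1.mul (h2.mul h4)
    have h6 : HasDerivAt g 0 t := by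
      refine h5.congr_deriv (Eq.symm ?_)
      -- show 0 = deriv expression
      have key : x * exp (t • x) * exp (φ t • y) +
          exp (t • x) * ((c * Real.exp (t * (-D))) • (y * exp (φ t • y))) =
          z * (exp (t • x) * exp (φ t • y)) := by
        rw [mul_smul_comm, ← mul_assoc, bch_conj_exp x y D h t, smul_mul_assoc, smul_smul]
        have : c * Real.exp (t * (-D)) * Real.exp (t * D) = c := by
          rw [mul_assoc, ← Real.exp_add]; ring_nf; simp
        rw [this, hz, add_mul, smul_mul_assoc, mul_assoc, mul_assoc y]
      have hcz : -z * exp (t • (-z)) = exp (t • (-z)) * (-z) :=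
        (((Commute.refl (-z)).smul_right t).exp_right).eq.symm ▸ rfl
      rw [key]
      have hcz' : Commute (-z) (exp (t • (-z))) := ((Commute.refl (-z)).smul_right t).exp_right
      calc (0:A) = (exp (t • (-z)) * (-z) + exp (t • (-z)) * z) *
            (exp (t • x) * exp (φ t • y)) := by
              rw [← mul_add]; simp
        _ = -z * exp (t • (-z)) * (exp (t • x) * exp (φ t • y)) +
            exp (t • (-z)) * (z * (exp (t • x) * exp (φ t • y))) := by
              rw [← hcz'.eq]; noncomm_ring
    exact h6
  have hconst : g 1 = g 0 :=
    is_const_of_deriv_eq_zero (fun s => (hgd s).differentiableAt)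
      (fun s => (hgd s).deriv) 1 0
  have hg0 : g 0 = 1 := by
    simp [hg, hφ, exp_zero]
  have hφ1 : φ 1 = 1 := by
    simp only [hφ, hc, one_mul]
    field_simp
  have hg1 : exp (-z) * (exp x * exp y) = 1 := by
    have := hconst.trans hg0
    simpa [hg, hφ1] using this
  have hinv : exp z * exp (-z) = 1 := by
    rw [← exp_add_of_commute_of_mem_ball (𝕂 := ℝ) ((Commute.refl z).neg_right) ((expSeries_radius_eq_top ℝ A).symm ▸ edist_lt_top _ _) ((expSeries_radius_eq_top ℝ A).symm ▸ edist_lt_top _ _)]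
    simp
  calc exp x * exp y = (exp z * exp (-z)) * (exp x * exp y) := by rw [hinv, one_mul]
    _ = exp z * (exp (-z) * (exp x * exp y)) := by rw [mul_assoc]
    _ = exp z := by rw [hg1, mul_one]
end

section
/- Let μ be a finite measure on ℝ with all moments finite, and define Z_N = ∫ ∏_{i=1}^N dμ(x_i) ∏_{i<j}(x_i − x_j)² and P_N(x) = (1/Z_N) ∫ ∏_{i=1}^N dμ(x_i) ∏_i (x − x_i) ∏_{i<j}(x_i − x_j)². Then ∫ dμ(x) P_N(x) x^M = 0 for all integers 0 ≤ M ≤ N−1, and ∫ dμ(x) P_N(x) x^N = Z_{N+1}/((N+1)·Z_N). -/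
open Finset

noncomputable def vprod {k : ℕ} (z : Fin k → ℝ) : ℝ :=
  ∏ i : Fin k, ∏ j ∈ Finset.Ioi i, (z j - z i)

lemma vprod_eq_det {k : ℕ} (z : Fin k → ℝ) :
    vprod z = (Matrix.vandermonde z).det := by
  rw [Matrix.det_vandermonde]; rfl

lemma prodIte {k : ℕ} (z : Fin k → ℝ) :
    (∏ i : Fin k, ∏ j : Fin k, if i < j then (z i - z j) ^ 2 else 1) = (vprod z) ^ 2 := by
  rw [vprod, ← Finset.prod_pow]
  refine Finset.prod_congr rfl fun i _ => ?_
  rw [← Finset.prod_pow, ← Finset.prod_filter]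
  refine Finset.prod_congr ?_ fun j _ => ?_
  · ext j; simp [Finset.mem_filter, Finset.mem_Ioi]
  · ring

lemma vprod_snoc {k : ℕ} (y : Fin k → ℝ) (x : ℝ) :
    vprod (Fin.snoc y x) = vprod y * ∏ i : Fin k, (x - y i) := by
  unfold vprod
  have h1 : ∀ (w : Fin (k+1) → ℝ) (i : Fin (k+1)), (∏ j ∈ Finset.Ioi i, (w j - w i)) =
      ∏ j : Fin (k+1), if i < j then w j - w i else 1 := by
    intro w i
    rw [← Finset.prod_filter]
    apply Finset.prod_congr _ fun _ _ => rfl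
    ext j; simp
  simp_rw [h1]
  rw [Fin.prod_univ_castSucc (f := fun i : Fin (k+1) => ∏ j : Fin (k+1), if i < j then (Fin.snoc y x : Fin (k+1) → ℝ) j - (Fin.snoc y x : Fin (k+1) → ℝ) i else 1)]
  have h2 : (∏ j : Fin (k+1), if Fin.last k < j then (Fin.snoc y x : Fin (k+1) → ℝ) j - (Fin.snoc y x : Fin (k+1) → ℝ) (Fin.last k) else 1) = 1 := by
    apply Finset.prod_eq_one
    intro j _
    rw [if_neg (by simp [Fin.lt_iff_val_lt_val, Nat.lt_succ_iff.mp j.isLt, Nat.not_lt.mpr (Nat.lt_succ_iff.mp j.isLt)])]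
  rw [h2, mul_one]
  have h3 : ∀ i : Fin k, (∏ j : Fin (k+1), if i.castSucc < j then (Fin.snoc y x : Fin (k+1) → ℝ) j - (Fin.snoc y x : Fin (k+1) → ℝ) i.castSucc else 1)
      = (∏ j : Fin k, if i < j then y j - y i else 1) * (x - y i) := by
    intro i
    rw [Fin.prod_univ_castSucc (f := fun j : Fin (k+1) => if i.castSucc < j then (Fin.snoc y x : Fin (k+1) → ℝ) j - (Fin.snoc y x : Fin (k+1) → ℝ) i.castSucc else 1)]
    congr 1
    · apply Finset.prod_congr rfl
      intro j _
      simp [Fin.castSucc_lt_castSucc_iff]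
    · simp [Fin.castSucc_lt_last]
  simp_rw [h3]
  rw [Finset.prod_mul_distrib]
  congr 1
  apply Finset.prod_congr rfl
  intro i _
  rw [← Finset.prod_filter]
  apply Finset.prod_congr _ fun _ _ => rfl
  ext j; simp

lemma vprod_perm {k : ℕ} (σ : Equiv.Perm (Fin k)) (z : Fin k → ℝ) :
    vprod (z ∘ σ) = (Equiv.Perm.sign σ : ℤ) * vprod z := by
  rw [vprod_eq_det, vprod_eq_det]
  have h : Matrix.vandermonde (z ∘ σ) = (Matrix.vandermonde z).submatrix σ id := by
    ext i j; simp [Matrix.vandermonde]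
  rw [h, Matrix.det_permute]

noncomputable def rot {k : ℕ} (i : Fin (k+1)) : Equiv.Perm (Fin (k+1)) :=
  Fin.revPerm * (Fin.cycleRange i.rev) * Fin.revPerm

lemma rot_apply {k : ℕ} (i j : Fin (k+1)) :
    rot i j = Fin.rev (Fin.cycleRange i.rev (Fin.rev j)) := rfl

lemma sign_rot {k : ℕ} (i : Fin (k+1)) :
    Equiv.Perm.sign (rot i) = (-1) ^ (i.rev : ℕ) := by
  have : rot i = Fin.revPerm * (Fin.cycleRange i.rev) * Fin.revPerm := rfl
  rw [this, Equiv.Perm.sign_mul, Equiv.Perm.sign_mul]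
  rw [Fin.sign_cycleRange]
  have h2 : Equiv.Perm.sign (Fin.revPerm : Equiv.Perm (Fin (k+1))) *
      Equiv.Perm.sign (Fin.revPerm : Equiv.Perm (Fin (k+1))) = 1 := by
    rw [← Equiv.Perm.sign_mul]
    have : (Fin.revPerm : Equiv.Perm (Fin (k+1))) * Fin.revPerm = 1 := by
      ext j; simp
    rw [this, Equiv.Perm.sign_one]
  calc Equiv.Perm.sign Fin.revPerm * (-1) ^ (i.rev : ℕ) * Equiv.Perm.sign Fin.revPerm
      = (Equiv.Perm.sign (Fin.revPerm : Equiv.Perm (Fin (k+1))) *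
        Equiv.Perm.sign (Fin.revPerm : Equiv.Perm (Fin (k+1)))) * (-1) ^ (i.rev : ℕ) := by rw [mul_right_comm]
    _ = (-1) ^ (i.rev : ℕ) := by rw [h2, one_mul]

lemma rot_self {k : ℕ} (i : Fin (k+1)) : rot i i = Fin.last k := by
  rw [rot_apply, Fin.cycleRange_self]
  simp [Fin.rev_zero]

lemma rot_succAbove {k : ℕ} (i : Fin (k+1)) (m : Fin k) :
    rot i (i.succAbove m) = m.castSucc := by
  rw [rot_apply]
  rcases lt_or_ge (m.castSucc) i with h | h
  · -- succAbove = castSucc, fixed by cycle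
    rw [Fin.succAbove_of_castSucc_lt _ _ h]
    rw [Fin.cycleRange_of_gt (by rwa [Fin.rev_lt_rev])]
    simp
  · rw [Fin.succAbove_of_le_castSucc _ _ h]
    rw [Fin.cycleRange_of_lt (by rw [Fin.rev_lt_rev]; exact lt_of_le_of_lt h Fin.castSucc_lt_succ)]
    rw [Fin.rev_succ]
    have : (m.rev).castSucc + 1 = (m.rev).succ := by
      rw [← Fin.coeSucc_eq_succ]
    rw [this, Fin.rev_succ, Fin.rev_rev]

lemma insertNth_eq_snoc_comp_rot {k : ℕ} (i : Fin (k+1)) (x : ℝ) (y : Fin k → ℝ) :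
    (Fin.insertNth i x y : Fin (k+1) → ℝ) = (Fin.snoc y x : Fin (k+1) → ℝ) ∘ (rot i) := by
  funext j
  refine Fin.succAboveCases i ?_ ?_ j
  · simp [rot_self]
  · intro m; simp [rot_succAbove, Fin.snoc_castSucc]

lemma vprod_insertNth {k : ℕ} (i : Fin (k+1)) (x : ℝ) (y : Fin k → ℝ) :
    vprod (Fin.insertNth i x y) = (-1 : ℝ) ^ ((k : ℕ) + (i : ℕ)) * vprod (Fin.snoc y x) := by
  rw [insertNth_eq_snoc_comp_rot, vprod_perm, sign_rot]
  have hi : (i.rev : ℕ) = k - (i : ℕ) := by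
    simp [Fin.val_rev]
  have hpar : ((((-1) ^ (i.rev : ℕ) : ℤˣ) : ℤ) : ℝ) = (-1 : ℝ) ^ ((k : ℕ) + (i : ℕ)) := by
    rw [hi]
    have hle : (i : ℕ) ≤ k := Nat.lt_succ_iff.mp i.isLt
    have : (k : ℕ) + (i : ℕ) = (k - (i : ℕ)) + 2 * i := by omega
    rw [this, pow_add, pow_mul]
    push_cast
    simp
  rw [hpar]

def expo {k : ℕ} (M : ℕ) (j : Fin (k+1)) : ℕ := if j = Fin.last k then M else (j : ℕ)

lemma detA_expand {k M : ℕ} (z : Fin (k+1) → ℝ) :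
    (Matrix.of fun i j => z i ^ (expo M j)).det
      = ∑ i : Fin (k+1), (-1 : ℝ) ^ ((i : ℕ) + k) * (z i ^ M * vprod (z ∘ i.succAbove)) := by
  rw [Matrix.det_succ_column _ (Fin.last k)]
  refine Finset.sum_congr rfl fun i _ => ?_
  have h1 : (Matrix.of fun i j => z i ^ (expo M j)) i (Fin.last k) = z i ^ M := by
    simp [expo]
  have h2 : ((Matrix.of fun i j => z i ^ (expo M j)).submatrix i.succAbove
      (Fin.last k).succAbove) = Matrix.vandermonde (z ∘ i.succAbove) := by
    ext r c
    simp only [Matrix.submatrix_apply, Fin.succAbove_last, Matrix.of_apply,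
      Matrix.vandermonde, Function.comp]
    rw [expo, if_neg (Fin.ne_last_of_lt (Fin.castSucc_lt_last c))]
    rfl
  rw [h1, h2, ← vprod_eq_det]
  simp [Fin.val_last, mul_assoc]

lemma detA_eq_zero {k M : ℕ} (hM : M < k) (z : Fin (k+1) → ℝ) :
    (Matrix.of fun i j => z i ^ (expo M j)).det = 0 := by
  apply Matrix.det_zero_of_column_eq (i := Fin.castSucc ⟨M, hM⟩) (j := Fin.last k)
  · exact Fin.ne_last_of_lt (Fin.castSucc_lt_last _)
  · intro r
    simp [expo, Fin.ne_last_of_lt (Fin.castSucc_lt_last (⟨M, hM⟩ : Fin k))]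

lemma detA_eq_vandermonde {k : ℕ} (z : Fin (k+1) → ℝ) :
    (Matrix.of fun i j => z i ^ (expo k j)).det = vprod z := by
  rw [vprod_eq_det]
  congr 1
  ext i j
  by_cases h : j = Fin.last k <;> simp [expo, h, Matrix.vandermonde, Fin.val_last]

open MeasureTheory

lemma integrable_pi_prod {n : ℕ} (μ : Measure ℝ) [IsFiniteMeasure μ] {f : Fin n → ℝ → ℝ}
    (hf : ∀ i, Integrable (f i) μ) :
    Integrable (fun x : Fin n → ℝ => ∏ i, f i (x i)) (Measure.pi fun _ => μ) := by
  induction n with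
  | zero =>
      simp only [Finset.univ_eq_empty, Finset.prod_empty]
      exact integrable_const _
  | succ n ih =>
      have hmp := (measurePreserving_piFinSuccAbove (fun _ : Fin (n+1) => μ) 0).symm
      rw [← hmp.integrable_comp_emb (MeasurableEquiv.measurableEmbedding _)]
      have : ((fun x : Fin (n+1) → ℝ => ∏ i, f i (x i)) ∘
          (MeasurableEquiv.piFinSuccAbove (fun _ => ℝ) 0).symm)
          = fun p : ℝ × (Fin n → ℝ) => f 0 p.1 * ∏ i : Fin n, f (Fin.succ i) (p.2 i) := by
        funext p
        simp only [Function.comp_apply, MeasurableEquiv.piFinSuccAbove_symm_apply,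
          Fin.insertNthEquiv, Equiv.coe_fn_mk, Fin.prod_univ_succ, Fin.insertNth_zero]
        simp [Fin.zero_succAbove]
      rw [this]
      exact Integrable.mul_prod (hf 0) (ih fun i => hf _)

lemma integrable_eval {n : ℕ} (μ : Measure ℝ) [IsFiniteMeasure μ]
    (hmom : ∀ k : ℕ, Integrable (fun x : ℝ => x ^ k) μ)
    (p : MvPolynomial (Fin n) ℝ) :
    Integrable (fun z : Fin n → ℝ => MvPolynomial.eval z p) (Measure.pi fun _ => μ) := by
  have : (fun z : Fin n → ℝ => MvPolynomial.eval z p)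
      = fun z => ∑ d ∈ p.support, MvPolynomial.coeff d p * ∏ i, z i ^ d i := by
    funext z; rw [MvPolynomial.eval_eq']
  rw [this]
  apply integrable_finset_sum
  intro d _
  exact (integrable_pi_prod μ (f := fun i x => x ^ d i) (fun i => hmom (d i))).const_mul _

lemma integrable_of_poly {n : ℕ} (μ : Measure ℝ) [IsFiniteMeasure μ]
    (hmom : ∀ k : ℕ, Integrable (fun x : ℝ => x ^ k) μ)
    (g : (Fin n → ℝ) → ℝ) (p : MvPolynomial (Fin n) ℝ)
    (hg : ∀ z, g z = MvPolynomial.eval z p) :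
    Integrable g (Measure.pi fun _ => μ) := by
  have : g = fun z => MvPolynomial.eval z p := funext hg
  rw [this]; exact integrable_eval μ hmom p

lemma heine_main (μ : Measure ℝ) [IsFiniteMeasure μ]
    (hmom : ∀ k : ℕ, Integrable (fun x : ℝ => x ^ k) μ) (N M : ℕ) :
    (∫ x : ℝ, (∫ y : Fin N → ℝ, (x ^ M * ((∏ i, (x - y i)) * (vprod y)^2))
        ∂(Measure.pi fun _ => μ)) ∂μ) * ((N : ℝ) + 1)
      = ∫ z : Fin (N+1) → ℝ, vprod z * (Matrix.of fun i j => z i ^ (expo M j)).det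
        ∂(Measure.pi fun _ => μ) := by
  classical
  set π : Measure (Fin N → ℝ) := Measure.pi fun _ => μ with hπ
  set PP : Measure (Fin (N+1) → ℝ) := Measure.pi fun _ => μ with hPP
  set f : ℝ × (Fin N → ℝ) → ℝ :=
    fun p => p.1 ^ M * ((∏ i, (p.1 - p.2 i)) * (vprod p.2)^2) with hf
  -- integrability of f on the product measure
  have hfint : Integrable f (μ.prod π) := by
    have hmp := measurePreserving_piFinSuccAbove (fun _ : Fin (N+1) => μ) (Fin.last N)
    rw [← hmp.integrable_comp_emb (MeasurableEquiv.measurableEmbedding _)]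
    apply integrable_of_poly μ hmom _
      ((MvPolynomial.X (Fin.last N) ^ M) *
        ((∏ i : Fin N, (MvPolynomial.X (Fin.last N) - MvPolynomial.X i.castSucc)) *
         (∏ r : Fin N, ∏ s ∈ Finset.Ioi r,
            (MvPolynomial.X (s.castSucc) - MvPolynomial.X (r.castSucc))) ^ 2))
    intro z
    simp only [Function.comp_apply, MeasurableEquiv.piFinSuccAbove_apply, hf,
      Fin.succAbove_last, vprod, Function.comp]
    simp [MvPolynomial.eval_prod, Fin.init]
  -- the integrals T i
  have hT : ∀ i : Fin (N+1),
      (∫ z, vprod z * ((z i) ^ M * vprod (z ∘ i.succAbove)) ∂PP)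
        = (-1 : ℝ) ^ (N + (i : ℕ)) * ∫ p, f p ∂(μ.prod π) := by
    intro i
    have hmp := measurePreserving_piFinSuccAbove (fun _ : Fin (N+1) => μ) i
    have hcomp := hmp.integral_comp (MeasurableEquiv.measurableEmbedding _)
      (fun p : ℝ × (Fin N → ℝ) =>
        vprod (Fin.insertNth i p.1 p.2) * (p.1 ^ M * vprod p.2))
    have hleft : (∫ z, vprod z * ((z i) ^ M * vprod (z ∘ i.succAbove)) ∂PP)
        = ∫ p : ℝ × (Fin N → ℝ),
            vprod (Fin.insertNth i p.1 p.2) * (p.1 ^ M * vprod p.2) ∂(μ.prod π) := by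
      rw [← hcomp]
      apply integral_congr_ae
      filter_upwards with z
      have hz : (MeasurableEquiv.piFinSuccAbove (fun _ : Fin (N+1) => ℝ) i) z
          = (z i, Fin.removeNth i z) := rfl
      rw [hz]
      simp only [Fin.insertNth_self_removeNth]
      rfl
    rw [hleft, ← integral_const_mul]
    apply integral_congr_ae
    filter_upwards with p
    rw [vprod_insertNth, vprod_snoc]
    simp only [hf]
    ring
  -- both sides equal (N+1) * ∫ f
  have hRHS : (∫ z, vprod z * (Matrix.of fun i j => z i ^ (expo M j)).det ∂PP)
      = ((N : ℝ) + 1) * ∫ p, f p ∂(μ.prod π) := by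
    have h1 : (fun z : Fin (N+1) → ℝ => vprod z * (Matrix.of fun i j => z i ^ (expo M j)).det)
        = fun z => ∑ i : Fin (N+1),
            (-1 : ℝ) ^ ((i : ℕ) + N) * (vprod z * ((z i) ^ M * vprod (z ∘ i.succAbove))) := by
      funext z
      rw [detA_expand, Finset.mul_sum]
      exact Finset.sum_congr rfl fun i _ => by ring
    rw [h1, integral_finset_sum]
    · have h2 : ∀ i : Fin (N+1),
          (∫ z, (-1 : ℝ) ^ ((i : ℕ) + N) * (vprod z * ((z i) ^ M * vprod (z ∘ i.succAbove))) ∂PP)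
            = ∫ p, f p ∂(μ.prod π) := by
        intro i
        rw [integral_const_mul, hT i, ← mul_assoc, add_comm (i : ℕ) N, ← pow_add,
          ← two_mul, pow_mul]
        simp
      rw [Finset.sum_congr rfl fun i _ => h2 i]
      simp [Finset.card_univ, mul_comm]
    · intro i _
      apply integrable_of_poly μ hmom _
        (MvPolynomial.C ((-1 : ℝ) ^ ((i : ℕ) + N)) *
          ((∏ r : Fin (N+1), ∏ s ∈ Finset.Ioi r, (MvPolynomial.X s - MvPolynomial.X r)) *
           (MvPolynomial.X i ^ M *
            ∏ r : Fin N, ∏ s ∈ Finset.Ioi r,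
              (MvPolynomial.X (i.succAbove s) - MvPolynomial.X (i.succAbove r)))))
      intro z
      simp only [vprod, Function.comp]
      simp [MvPolynomial.eval_prod]
  rw [hRHS, ← integral_prod f hfint, mul_comm]



open MeasureTheory in
/-- Heine's formula: with `Z n = ∫ ∏_{i<j}(x_i−x_j)² dμ^n` and
`P_N(x) = (1/Z_N) ∫ ∏_i (x−y_i) ∏_{i<j}(y_i−y_j)² dμ^N`, one has
`∫ P_N(x) x^M dμ = 0` for `0 ≤ M ≤ N−1` and
`∫ P_N(x) x^N dμ = Z_{N+1}/((N+1)·Z_N)`. -/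
theorem stmt_13 (μ : Measure ℝ) [IsFiniteMeasure μ]
    (hmom : ∀ k : ℕ, MeasureTheory.Integrable (fun x : ℝ => x ^ k) μ)
    (N : ℕ) (Z : ℕ → ℝ) (P : ℝ → ℝ)
    (hZ : ∀ n, Z n = ∫ x : Fin n → ℝ,
        (∏ i : Fin n, ∏ j : Fin n, if i < j then (x i - x j) ^ 2 else 1)
        ∂(Measure.pi fun _ => μ))
    (hZN : Z N ≠ 0)
    (hP : ∀ x : ℝ, P x = (Z N)⁻¹ * ∫ y : Fin N → ℝ,
        (∏ i : Fin N, (x - y i)) *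
          (∏ i : Fin N, ∏ j : Fin N, if i < j then (y i - y j) ^ 2 else 1)
        ∂(Measure.pi fun _ => μ)) :
    (∀ M : ℕ, M < N → ∫ x : ℝ, P x * x ^ M ∂μ = 0) ∧
      (∫ x : ℝ, P x * x ^ N ∂μ) = Z (N + 1) / ((N + 1) * Z N) := by
  have key : ∀ M : ℕ, (∫ x : ℝ, P x * x ^ M ∂μ)
      = (Z N)⁻¹ * ∫ x : ℝ, (∫ y : Fin N → ℝ,
          (x ^ M * ((∏ i, (x - y i)) * (vprod y)^2)) ∂(Measure.pi fun _ => μ)) ∂μ := by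
    intro M
    rw [← integral_const_mul]
    apply integral_congr_ae
    filter_upwards with x
    rw [hP x, mul_assoc]
    congr 1
    rw [mul_comm, ← integral_const_mul]
    apply integral_congr_ae
    filter_upwards with y
    rw [prodIte]
  constructor
  · intro M hM
    have h := heine_main μ hmom N M
    have hz : (∫ z : Fin (N+1) → ℝ, vprod z * (Matrix.of fun i j => z i ^ (expo M j)).det
        ∂(Measure.pi fun _ => μ)) = 0 := by
      have : ∀ z : Fin (N+1) → ℝ,
          vprod z * (Matrix.of fun i j => z i ^ (expo M j)).det = 0 := by
        intro z; rw [detA_eq_zero hM]; ring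
      rw [integral_congr_ae (g := fun _ => (0:ℝ)) (Filter.Eventually.of_forall this),
        integral_zero]
    rw [hz] at h
    have hQ : (∫ x : ℝ, (∫ y : Fin N → ℝ,
        (x ^ M * ((∏ i, (x - y i)) * (vprod y)^2)) ∂(Measure.pi fun _ => μ)) ∂μ) = 0 := by
      have hne : ((N : ℝ) + 1) ≠ 0 := by positivity
      exact (mul_eq_zero.mp h).resolve_right hne
    rw [key M, hQ, mul_zero]
  · have h := heine_main μ hmom N N
    have hz : (∫ z : Fin (N+1) → ℝ, vprod z * (Matrix.of fun i j => z i ^ (expo N j)).det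
        ∂(Measure.pi fun _ => μ)) = Z (N + 1) := by
      rw [hZ (N + 1)]
      apply integral_congr_ae
      filter_upwards with z
      rw [detA_eq_vandermonde, prodIte]
      ring
    rw [hz] at h
    rw [key N]
    have hne : ((N : ℝ) + 1) ≠ 0 := by positivity
    have hQ : (∫ x : ℝ, (∫ y : Fin N → ℝ,
        (x ^ N * ((∏ i, (x - y i)) * (vprod y)^2)) ∂(Measure.pi fun _ => μ)) ∂μ)
          = Z (N + 1) / ((N : ℝ) + 1) := by
      rw [eq_div_iff hne]
      exact h
    rw [hQ, inv_mul_eq_div, div_div]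
end
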